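/- Assume in addition that, for a fixed s ∈ {1,…,d}, V_{1+s}^n = v_s/‖ v_s ‖. Then the function E_s^n ρ^n lies in the linear span of { X_i^n, ∂_{x_t}X_i^n, K_i^{n+1} : 1 ≤ i ≤ r, 1 ≤ t ≤ d }; in particular E_s^n ρ^n lies in the span of the augmented basis { X̃_k^{n+1} }, so that Σ_k ⟨X̃_k^{n+1}, E_s^n ρ^n⟩_x X̃_k^{n+1} = E_s^n ρ^n. -/

import Mathlib

open MeasureTheory Real Set

noncomputable section

/-- Partial derivative of `u` in the `i`-th coordinate direction. -/
def pd {d : ℕ} (i : Fin d) (u : (Fin d → ℝ) → ℝ) (x : Fin d → ℝ) : ℝ :=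
  fderiv ℝ u x (Pi.single i 1)

/-- Gaussian weight `f_{0v}(v) = exp(-|v|²/2)`. -/
def f0v {d : ℕ} (v : Fin d → ℝ) : ℝ := Real.exp (-(∑ i, v i ^ 2) / 2)

/-- Fundamental domain of the `d`-dimensional torus `Ω_x`. -/
def cube (d : ℕ) : Set (Fin d → ℝ) := Set.univ.pi fun _ => Set.Ioc (0 : ℝ) 1

/-- `L²(Ω_x)` inner product. -/
def ipx {d : ℕ} (u w : (Fin d → ℝ) → ℝ) : ℝ := ∫ x in cube d, u x * w x

/-- Weighted inner product `⟨u,w⟩_v = ∫ f_{0v} u w dv`. -/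
def ipv {d : ℕ} (u w : (Fin d → ℝ) → ℝ) : ℝ := ∫ v, f0v v * u v * w v

/-- Weighted norm `‖w‖ = ⟨w,w⟩_v^{1/2}`. -/
def nv {d : ℕ} (w : (Fin d → ℝ) → ℝ) : ℝ := Real.sqrt (ipv w w)

/-- Periodicity with period 1 in each coordinate (functions on the torus). -/
def Per {d : ℕ} (u : (Fin d → ℝ) → ℝ) : Prop := ∀ x i, u (x + Pi.single i 1) = u x

/-- All (iterated) derivatives have at most polynomial growth. -/
def PolyAll {d : ℕ} (g : (Fin d → ℝ) → ℝ) : Prop :=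
  ∀ n : ℕ, ∃ (C : ℝ) (p : ℕ), ∀ v, ‖iteratedFDeriv ℝ n g v‖ ≤ C * (1 + ‖v‖) ^ p

/-! ### Auxiliary lemmas -/

lemma one_le_top' : ((⊤ : ℕ∞) : WithTop ℕ∞) ≠ 0 := by
  exact_mod_cast (WithTop.top_ne_zero : (⊤ : ℕ∞) ≠ 0)

variable {d : ℕ}

lemma contDiff_proj (i : Fin d) : ContDiff ℝ (⊤ : ℕ∞) (fun v : Fin d → ℝ => v i) :=
  contDiff_pi.mp contDiff_id i

lemma differentiable_proj (i : Fin d) : Differentiable ℝ (fun v : Fin d → ℝ => v i) :=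
  (contDiff_proj i).differentiable one_le_top'

lemma fderiv_proj (i : Fin d) (v : Fin d → ℝ) :
    fderiv ℝ (fun w : Fin d → ℝ => w i) v
      = ContinuousLinearMap.proj (R := ℝ) (φ := fun _ : Fin d => ℝ) i :=
  (ContinuousLinearMap.proj (R := ℝ) (φ := fun _ : Fin d => ℝ) i).fderiv

lemma pd_proj (t i : Fin d) (v : Fin d → ℝ) :
    pd t (fun w : Fin d → ℝ => w i) v = (Pi.single t 1 : Fin d → ℝ) i := by
  unfold pd; rw [fderiv_proj]; rfl

lemma pd_sum {ι : Type*} (u : Finset ι) (F : ι → (Fin d → ℝ) → ℝ) {x : Fin d → ℝ}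
    (h : ∀ i ∈ u, DifferentiableAt ℝ (F i) x) (t : Fin d) :
    pd t (fun y => ∑ i ∈ u, F i y) x = ∑ i ∈ u, pd t (F i) x := by
  unfold pd; rw [fderiv_fun_sum h]; simp

lemma pd_const_mul (t : Fin d) {F : (Fin d → ℝ) → ℝ} {x : Fin d → ℝ}
    (h : DifferentiableAt ℝ F x) (c : ℝ) :
    pd t (fun y => c * F y) x = c * pd t F x := by
  unfold pd; rw [fderiv_const_mul h]; simp

lemma pd_mul (t : Fin d) {F G : (Fin d → ℝ) → ℝ} {v : Fin d → ℝ}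
    (hF : DifferentiableAt ℝ F v) (hG : DifferentiableAt ℝ G v) :
    pd t (fun w => F w * G w) v = F v * pd t G v + G v * pd t F v := by
  unfold pd; rw [fderiv_fun_mul hF hG]; simp

lemma contDiff_f0v : ContDiff ℝ (⊤ : ℕ∞) (f0v (d := d)) := by
  have h1 : ContDiff ℝ ((⊤:ℕ∞) : WithTop ℕ∞) (fun v : Fin d → ℝ => -(∑ i, v i ^ 2) / 2) :=
    (((ContDiff.sum fun i _ => (contDiff_proj i).pow 2)).neg).div_const 2
  exact Real.contDiff_exp.comp h1

lemma differentiable_f0v : Differentiable ℝ (f0v (d := d)) :=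
  contDiff_f0v.differentiable one_le_top'

lemma continuous_f0v : Continuous (f0v (d := d)) := contDiff_f0v.continuous

lemma f0v_pos (v : Fin d → ℝ) : 0 < f0v v := Real.exp_pos _

lemma pd_sq (i t : Fin d) (v : Fin d → ℝ) :
    pd t (fun w : Fin d → ℝ => w i ^ 2) v = 2 * v i * (Pi.single t 1 : Fin d → ℝ) i := by
  have h : (fun w : Fin d → ℝ => w i ^ 2) = fun w => w i * w i := by funext w; ring
  rw [h, pd_mul t ((differentiable_proj i) v) ((differentiable_proj i) v), pd_proj]
  ring

lemma pd_f0v (t : Fin d) (v : Fin d → ℝ) : pd t (f0v (d := d)) v = -(v t) * f0v v := by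
  have hq : DifferentiableAt ℝ (fun v : Fin d → ℝ => -(∑ i, v i ^ 2) / 2) v :=
    ((((ContDiff.sum fun i _ => (contDiff_proj (d := d) i).pow 2)).neg).div_const
      2).differentiable one_le_top' v
  have h0 : pd t (f0v (d := d)) v
      = f0v v * pd t (fun v : Fin d → ℝ => -(∑ i, v i ^ 2) / 2) v := by
    unfold pd f0v
    rw [fderiv_exp hq]
    simp [f0v]
  rw [h0]
  have h1 : (fun v : Fin d → ℝ => -(∑ i, v i ^ 2) / 2)
      = fun v : Fin d → ℝ => (-(2:ℝ)⁻¹) * ∑ i, v i ^ 2 := by funext w; ring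
  have h2 : DifferentiableAt ℝ (fun v : Fin d → ℝ => ∑ i, v i ^ 2) v :=
    ((ContDiff.sum fun i _ =>
      (contDiff_proj (d := d) i).pow 2)).differentiable one_le_top' v
  rw [h1, pd_const_mul t h2,
    pd_sum Finset.univ _ (fun i _ => (((contDiff_proj (d := d) i).pow 2)).differentiable
      one_le_top' v) t]
  have h3 : ∀ i : Fin d, pd t (fun w : Fin d → ℝ => w i ^ 2) v
      = 2 * v i * (Pi.single t 1 : Fin d → ℝ) i := fun i => pd_sq i t v
  rw [Finset.sum_congr rfl fun i _ => h3 i]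
  have h4 : (∑ i, 2 * v i * (Pi.single t 1 : Fin d → ℝ) i) = 2 * v t := by
    rw [Finset.sum_eq_single t]
    · simp
    · intro i _ hi
      simp [Pi.single_apply, hi]
    · intro h; exact absurd (Finset.mem_univ t) h
  rw [h4]; ring

/-! ### Polynomial growth -/

def PolyG (h : (Fin d → ℝ) → ℝ) : Prop := ∃ (C : ℝ) (p : ℕ), ∀ v, |h v| ≤ C * (1 + ‖v‖) ^ p

lemma polyG_nonneg_const {h : (Fin d → ℝ) → ℝ} {C : ℝ} {p : ℕ}
    (hb : ∀ v, |h v| ≤ C * (1 + ‖v‖) ^ p) : 0 ≤ C := by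
  have := (abs_nonneg (h 0)).trans (hb 0)
  simpa using this

lemma PolyG.mul {h1 h2 : (Fin d → ℝ) → ℝ} (H1 : PolyG h1) (H2 : PolyG h2) :
    PolyG (fun v => h1 v * h2 v) := by
  obtain ⟨C1, p1, b1⟩ := H1
  obtain ⟨C2, p2, b2⟩ := H2
  refine ⟨C1 * C2, p1 + p2, fun v => ?_⟩
  have h01 : (0:ℝ) ≤ C1 * (1 + ‖v‖) ^ p1 := (abs_nonneg _).trans (b1 v)
  calc |h1 v * h2 v| = |h1 v| * |h2 v| := abs_mul _ _
    _ ≤ (C1 * (1 + ‖v‖) ^ p1) * (C2 * (1 + ‖v‖) ^ p2) :=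
        mul_le_mul (b1 v) (b2 v) (abs_nonneg _) h01
    _ = (C1 * C2) * (1 + ‖v‖) ^ (p1 + p2) := by rw [pow_add]; ring

lemma one_le_one_add_norm (v : Fin d → ℝ) : (1:ℝ) ≤ 1 + ‖v‖ :=
  le_add_of_nonneg_right (norm_nonneg v)

lemma PolyG.add {h1 h2 : (Fin d → ℝ) → ℝ} (H1 : PolyG h1) (H2 : PolyG h2) :
    PolyG (fun v => h1 v + h2 v) := by
  obtain ⟨C1, p1, b1⟩ := H1
  obtain ⟨C2, p2, b2⟩ := H2
  have hC1 : 0 ≤ C1 := polyG_nonneg_const b1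
  have hC2 : 0 ≤ C2 := polyG_nonneg_const b2
  refine ⟨C1 + C2, p1 + p2, fun v => ?_⟩
  have e1 : (1 + ‖v‖) ^ p1 ≤ (1 + ‖v‖) ^ (p1 + p2) :=
    pow_le_pow_right₀ (one_le_one_add_norm v) (Nat.le_add_right _ _)
  have e2 : (1 + ‖v‖) ^ p2 ≤ (1 + ‖v‖) ^ (p1 + p2) :=
    pow_le_pow_right₀ (one_le_one_add_norm v) (Nat.le_add_left _ _)
  calc |h1 v + h2 v| ≤ |h1 v| + |h2 v| := abs_add_le _ _
    _ ≤ C1 * (1 + ‖v‖) ^ p1 + C2 * (1 + ‖v‖) ^ p2 := add_le_add (b1 v) (b2 v)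
    _ ≤ C1 * (1 + ‖v‖) ^ (p1 + p2) + C2 * (1 + ‖v‖) ^ (p1 + p2) :=
        add_le_add (mul_le_mul_of_nonneg_left e1 hC1) (mul_le_mul_of_nonneg_left e2 hC2)
    _ = (C1 + C2) * (1 + ‖v‖) ^ (p1 + p2) := by ring

lemma PolyG.neg {h : (Fin d → ℝ) → ℝ} (H : PolyG h) : PolyG (fun v => -(h v)) := by
  obtain ⟨C, p, b⟩ := H
  exact ⟨C, p, fun v => by rw [abs_neg]; exact b v⟩

lemma PolyG.sub {h1 h2 : (Fin d → ℝ) → ℝ} (H1 : PolyG h1) (H2 : PolyG h2) :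
    PolyG (fun v => h1 v - h2 v) := by
  have := H1.add H2.neg
  simpa [sub_eq_add_neg] using this

lemma polyG_proj (t : Fin d) : PolyG (fun v : Fin d → ℝ => v t) := by
  refine ⟨1, 1, fun v => ?_⟩
  have h1 : |v t| ≤ ‖v‖ := by simpa using norm_le_pi_norm v t
  have := norm_nonneg v
  calc |v t| ≤ ‖v‖ := h1
    _ ≤ 1 * (1 + ‖v‖) ^ 1 := by
        simp only [one_mul, pow_one]
        linarith

lemma polyG_of_polyAll {g : (Fin d → ℝ) → ℝ} (hp : PolyAll g) : PolyG g := by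
  obtain ⟨C, p, hb⟩ := hp 0
  refine ⟨C, p, fun v => ?_⟩
  have := hb v
  rwa [norm_iteratedFDeriv_zero, Real.norm_eq_abs] at this

lemma polyG_pd {g : (Fin d → ℝ) → ℝ} (hp : PolyAll g) (t : Fin d) : PolyG (pd t g) := by
  obtain ⟨C, p, hb⟩ := hp 1
  refine ⟨C, p, fun v => ?_⟩
  have h1 : pd t g v = iteratedFDeriv ℝ 1 g v (fun _ => Pi.single t 1) := by
    unfold pd
    exact (iteratedFDeriv_one_apply (𝕜 := ℝ) (f := g) (x := v)
      (fun _ => Pi.single t 1)).symm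
  calc |pd t g v| = ‖iteratedFDeriv ℝ 1 g v (fun _ => Pi.single t 1)‖ := by
        rw [← Real.norm_eq_abs, h1]
    _ ≤ ‖iteratedFDeriv ℝ 1 g v‖ * ∏ _i : Fin 1, ‖(Pi.single t 1 : Fin d → ℝ)‖ :=
        ContinuousMultilinearMap.le_opNorm _ _
    _ = ‖iteratedFDeriv ℝ 1 g v‖ := by simp [Pi.norm_single]
    _ ≤ C * (1 + ‖v‖) ^ p := hb v

lemma continuous_pd {g : (Fin d → ℝ) → ℝ} (hg : ContDiff ℝ (⊤ : ℕ∞) g) (t : Fin d) :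
    Continuous (pd t g) :=
  (hg.continuous_fderiv_apply one_le_top').comp (continuous_id.prodMk continuous_const)

/-! ### Integrability of gaussian times polynomial growth -/

lemma gg_integrable (p : ℕ) :
    Integrable (fun x : ℝ => (1 + |x|) ^ p * Real.exp (-(1/2) * x ^ 2)) := by
  have hb : (0:ℝ) < 1/2 := by norm_num
  have h1 : Integrable (fun x : ℝ => Real.exp (-(1/2) * x ^ 2)) := integrable_exp_neg_mul_sq hb
  have h0 : Integrable (fun x : ℝ => x ^ (p:ℝ) * Real.exp (-(1/2) * x ^ 2)) :=
    integrable_rpow_mul_exp_neg_mul_sq hb (neg_one_lt_zero.trans_le (Nat.cast_nonneg p))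
  have h2 : Integrable (fun x : ℝ => |x| ^ p * Real.exp (-(1/2) * x ^ 2)) := by
    have h3 := h0.abs
    refine h3.congr ?_
    filter_upwards with x
    rw [abs_mul, Real.abs_exp, Real.rpow_natCast, abs_pow]
  have hg : Integrable (fun x : ℝ =>
      2 ^ p * Real.exp (-(1/2) * x ^ 2) + 2 ^ p * (|x| ^ p * Real.exp (-(1/2) * x ^ 2))) :=
    (h1.const_mul _).add (h2.const_mul _)
  refine hg.mono' ?_ ?_
  · exact (((continuous_const.add continuous_abs).pow p).mul
      (Real.continuous_exp.comp (continuous_const.mul (continuous_pow 2)))).aestronglyMeasurable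
  · filter_upwards with x
    have hxp : (0:ℝ) ≤ Real.exp (-(1/2) * x ^ 2) := (Real.exp_pos _).le
    have key : (1 + |x|) ^ p ≤ 2 ^ p + 2 ^ p * |x| ^ p := by
      rcases le_total |x| 1 with h | h
      · have : (1 + |x|) ^ p ≤ 2 ^ p := by
          apply pow_le_pow_left₀ (by positivity)
          linarith
        have : (0:ℝ) ≤ 2 ^ p * |x| ^ p := by positivity
        nlinarith [pow_le_pow_left₀ (by positivity : (0:ℝ) ≤ 1 + |x|)
          (by linarith : 1 + |x| ≤ 2) p]
      · have h4 : (1 + |x|) ^ p ≤ (2 * |x|) ^ p :=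
          pow_le_pow_left₀ (by positivity) (by linarith) p
        have : (0:ℝ) ≤ (2:ℝ) ^ p := by positivity
        calc (1 + |x|) ^ p ≤ (2 * |x|) ^ p := h4
          _ = 2 ^ p * |x| ^ p := by rw [mul_pow]
          _ ≤ 2 ^ p + 2 ^ p * |x| ^ p := le_add_of_nonneg_left (by positivity)
    have hn : ‖(1 + |x|) ^ p * Real.exp (-(1/2) * x ^ 2)‖
        = (1 + |x|) ^ p * Real.exp (-(1/2) * x ^ 2) := by
      rw [Real.norm_eq_abs, abs_of_nonneg (by positivity)]
    rw [hn]
    calc (1 + |x|) ^ p * Real.exp (-(1/2) * x ^ 2)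
        ≤ (2 ^ p + 2 ^ p * |x| ^ p) * Real.exp (-(1/2) * x ^ 2) :=
          mul_le_mul_of_nonneg_right key hxp
      _ = 2 ^ p * Real.exp (-(1/2) * x ^ 2) + 2 ^ p * (|x| ^ p * Real.exp (-(1/2) * x ^ 2)) := by
          ring

lemma f0v_prod (v : Fin d → ℝ) : f0v v = ∏ i, Real.exp (-(1/2) * v i ^ 2) := by
  unfold f0v
  rw [← Real.exp_sum]
  congr 1
  rw [← Finset.mul_sum]
  ring

lemma one_add_norm_le_prod (hd : 0 < d) (v : Fin d → ℝ) :
    (1 : ℝ) + ‖v‖ ≤ ∏ i, (1 + |v i|) := by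
  haveI : Nonempty (Fin d) := ⟨⟨0, hd⟩⟩
  obtain ⟨i0, -, hsup⟩ := Finset.exists_mem_eq_sup Finset.univ Finset.univ_nonempty
    (fun i => ‖v i‖₊)
  have h1 : ‖v‖ = |v i0| := by
    rw [Pi.norm_def, hsup]; simp [Real.norm_eq_abs]
  rw [h1]
  have h2 : (1:ℝ) ≤ ∏ i ∈ Finset.univ.erase i0, (1 + |v i|) := by
    calc (1:ℝ) = ∏ _i ∈ Finset.univ.erase i0, (1:ℝ) := by simp
      _ ≤ ∏ i ∈ Finset.univ.erase i0, (1 + |v i|) :=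
          Finset.prod_le_prod (fun _ _ => zero_le_one)
            (fun i _ => le_add_of_nonneg_right (abs_nonneg _))
  calc 1 + |v i0| = (1 + |v i0|) * 1 := (mul_one _).symm
    _ ≤ (1 + |v i0|) * ∏ i ∈ Finset.univ.erase i0, (1 + |v i|) :=
        mul_le_mul_of_nonneg_left h2 (by positivity)
    _ = ∏ i, (1 + |v i|) := Finset.mul_prod_erase Finset.univ (fun i => 1 + |v i|) (Finset.mem_univ i0)

lemma gauss_poly_bound (hd : 0 < d) (p : ℕ) (v : Fin d → ℝ) :
    (1 + ‖v‖) ^ p * f0v v ≤ ∏ i, ((1 + |v i|) ^ p * Real.exp (-(1/2) * v i ^ 2)) := by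
  rw [Finset.prod_mul_distrib, Finset.prod_pow, ← f0v_prod]
  apply mul_le_mul_of_nonneg_right _ (f0v_pos v).le
  exact pow_le_pow_left₀ (by positivity) (one_add_norm_le_prod hd v) p

lemma integrable_f0v_mul (hd : 0 < d) {h : (Fin d → ℝ) → ℝ} (hc : Continuous h)
    (hp : PolyG h) : Integrable (fun v : Fin d → ℝ => f0v v * h v) := by
  obtain ⟨C, p, hb⟩ := hp
  have hC : 0 ≤ C := polyG_nonneg_const hb
  have hgint : Integrable (fun v : Fin d → ℝ =>
      C * ∏ i, ((1 + |v i|) ^ p * Real.exp (-(1/2) * v i ^ 2))) :=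
    (MeasureTheory.Integrable.fintype_prod
      (f := fun _ : Fin d => fun x : ℝ => (1 + |x|) ^ p * Real.exp (-(1/2) * x ^ 2))
      (fun _ => gg_integrable p)).const_mul C
  refine hgint.mono' ((continuous_f0v.mul hc).aestronglyMeasurable) ?_
  filter_upwards with v
  have h1 : ‖f0v v * h v‖ = f0v v * |h v| := by
    rw [Real.norm_eq_abs, abs_mul, abs_of_pos (f0v_pos v)]
  rw [h1]
  calc f0v v * |h v| ≤ f0v v * (C * (1 + ‖v‖) ^ p) :=
        mul_le_mul_of_nonneg_left (hb v) (f0v_pos v).le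
    _ = C * ((1 + ‖v‖) ^ p * f0v v) := by ring
    _ ≤ C * ∏ i, ((1 + |v i|) ^ p * Real.exp (-(1/2) * v i ^ 2)) :=
        mul_le_mul_of_nonneg_left (gauss_poly_bound hd p v) hC

/-! ### Integration by parts -/

lemma ibp (t : Fin d) {φ g : (Fin d → ℝ) → ℝ} (hφ : Differentiable ℝ φ)
    (hg : Differentiable ℝ g)
    (h1 : Integrable fun v => pd t φ v * g v) (h2 : Integrable fun v => φ v * pd t g v)
    (h3 : Integrable fun v => φ v * g v) :
    (∫ v, φ v * pd t g v) = - ∫ v, pd t φ v * g v :=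
  integral_mul_fderiv_eq_neg_fderiv_mul_of_integrable h1 h2 h3 (fun x _ => hφ x) (fun x _ => hg x)

/-! ### Interchanging integral with finite sums -/

lemma integral_sum2 {α β : Type*} [Fintype α] [Fintype β]
    (A : α → β → (Fin d → ℝ) → ℝ) (hA : ∀ a b, Integrable (A a b)) :
    (∫ v, ∑ a, ∑ b, A a b v) = ∑ a, ∑ b, ∫ v, A a b v := by
  rw [integral_finset_sum _ (fun a _ => integrable_finset_sum _ fun b _ => hA a b)]
  exact Finset.sum_congr rfl fun a _ => integral_finset_sum _ fun b _ => hA a b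

lemma integral_sum3 {α β γ : Type*} [Fintype α] [Fintype β] [Fintype γ]
    (A : α → β → γ → (Fin d → ℝ) → ℝ) (hA : ∀ a b c, Integrable (A a b c)) :
    (∫ v, ∑ a, ∑ b, ∑ c, A a b c v) = ∑ a, ∑ b, ∑ c, ∫ v, A a b c v := by
  rw [integral_finset_sum _ (fun a _ => integrable_finset_sum _ fun b _ =>
    integrable_finset_sum _ fun c _ => hA a b c)]
  exact Finset.sum_congr rfl fun a _ => integral_sum2 (A a) (hA a)
/-- if `V_{1+s}^n = v_s/‖v_s‖`, then `E_s^n ρ^n` lies in the span of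
`{X_i^n, ∂_t X_i^n, K_i^{n+1}}`, hence in the span of the augmented basis `{X̃_k^{n+1}}`,
so that its orthonormal expansion in the `X̃_k^{n+1}` reproduces it exactly. -/
theorem Erho_in_augmented_span
    (d r R : ℕ) (hd : 0 < d) (hr : d + 1 ≤ r)
    (τ : ℝ) (hτ : 0 < τ)
    (S : Fin r → Fin r → ℝ)
    (E : (Fin d → ℝ) → Fin d → ℝ)
    (hEsm : ∀ s, ContDiff ℝ (⊤ : ℕ∞) fun x => E x s)
    (hEper : ∀ s, Per fun x => E x s)
    (X : Fin r → (Fin d → ℝ) → ℝ)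
    (hXsm : ∀ i, ContDiff ℝ (⊤ : ℕ∞) (X i)) (hXper : ∀ i, Per (X i))
    (hXon : ∀ i j, ipx (X i) (X j) = if i = j then (1 : ℝ) else 0)
    (V : Fin r → (Fin d → ℝ) → ℝ)
    (hVsm : ∀ j, ContDiff ℝ (⊤ : ℕ∞) (V j)) (hVpoly : ∀ j, PolyAll (V j))
    (hVon : ∀ i j, ipv (V i) (V j) = if i = j then (1 : ℝ) else 0)
    -- the low-rank function f^n and the right-hand side RHS[f^n]
    (fn : (Fin d → ℝ) → (Fin d → ℝ) → ℝ)
    (hfn : fn = fun x v => f0v v * ∑ i, ∑ j, X i x * S i j * V j v)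
    (RHS : (Fin d → ℝ) → (Fin d → ℝ) → ℝ)
    (hRHS : RHS = fun x v =>
      -(∑ s, v s * pd s (fun y => fn y v) x) + ∑ s, E x s * pd s (fn x) v)
    -- the K step: K^{n+1}_k = K^n_k + τ ∫ V_k RHS[f^n] dv
    (K1 : Fin r → (Fin d → ℝ) → ℝ)
    (hK1 : K1 = fun k x => (∑ i, X i x * S i k) + τ * ∫ v, V k v * RHS x v)
    -- the augmented basis X̃^{n+1}: orthonormal, containing X_i, ∂_t X_i and K_i^{n+1}
    (Xt : Fin R → (Fin d → ℝ) → ℝ)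
    (hXtsm : ∀ k, ContDiff ℝ (⊤ : ℕ∞) (Xt k)) (hXtper : ∀ k, Per (Xt k))
    (hXton : ∀ k l, ipx (Xt k) (Xt l) = if k = l then (1 : ℝ) else 0)
    (hspanX : ∀ i, X i ∈ Submodule.span ℝ (Set.range Xt))
    (hspanDX : ∀ i t, pd t (X i) ∈ Submodule.span ℝ (Set.range Xt))
    (hspanK : ∀ i, K1 i ∈ Submodule.span ℝ (Set.range Xt))
    -- the fixed index s and the assumption V_{1+s} = v_s/‖v_s‖
    (s : Fin d)
    (hVs : V ⟨s.1 + 1, by have := s.isLt; omega⟩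
      = fun v => v s / nv fun v : Fin d → ℝ => v s)
    -- the moment ρ^n
    (ρ : (Fin d → ℝ) → ℝ) (hρ : ρ = fun x => ∫ v, fn x v) :
    (fun x => E x s * ρ x) ∈ Submodule.span ℝ
        (Set.range X ∪ Set.range (fun p : Fin r × Fin d => pd p.2 (X p.1))
          ∪ Set.range K1) ∧
      ∀ x, (∑ k, ipx (Xt k) (fun y => E y s * ρ y) * Xt k x) = E x s * ρ x := by
  classical
  set c : ℝ := nv (fun v : Fin d → ℝ => v s) with hcdef
  obtain ⟨k0, hVk0⟩ : ∃ k : Fin r, V k = (fun v : Fin d → ℝ => v s / c) :=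
    ⟨⟨s.1 + 1, by have := s.isLt; omega⟩, hVs⟩
  have hτ' : τ ≠ 0 := ne_of_gt hτ
  -- `c ≠ 0`
  have hc : c ≠ 0 := by
    intro h0
    have h1 := hVon k0 k0
    rw [hVk0, if_pos rfl, h0] at h1
    simp [ipv] at h1
  -- basic differentiability / continuity / growth facts
  have hXd : ∀ i, Differentiable ℝ (X i) := fun i => (hXsm i).differentiable one_le_top'
  have hVd : ∀ j, Differentiable ℝ (V j) := fun j => (hVsm j).differentiable one_le_top'
  have hf0d : Differentiable ℝ (f0v (d := d)) := differentiable_f0v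
  have hfvd : ∀ j, Differentiable ℝ (fun w => f0v w * V j w) := fun j => hf0d.mul (hVd j)
  have cV : ∀ j, Continuous (V j) := fun j => (hVsm j).continuous
  have pgV : ∀ j, PolyG (V j) := fun j => polyG_of_polyAll (hVpoly j)
  have pgdV : ∀ j t, PolyG (pd t (V j)) := fun j t => polyG_pd (hVpoly j) t
  have cdV : ∀ j t, Continuous (pd t (V j)) := fun j t => continuous_pd (hVsm j) t
  have cproj : ∀ t : Fin d, Continuous (fun v : Fin d → ℝ => v t) :=
    fun t => (contDiff_proj t).continuous
  -- basic integrability facts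
  have hIntm : ∀ j, Integrable (fun v => f0v v * V j v) :=
    fun j => integrable_f0v_mul hd (cV j) (pgV j)
  have hInt1 : ∀ (t : Fin d) (j k : Fin r),
      Integrable (fun v => f0v v * (v t * (V j v * V k v))) := fun t j k =>
    integrable_f0v_mul hd ((cproj t).mul ((cV j).mul (cV k)))
      ((polyG_proj t).mul ((pgV j).mul (pgV k)))
  have hpdfv : ∀ (t : Fin d) (j : Fin r) (v : Fin d → ℝ),
      pd t (fun w => f0v w * V j w) v = f0v v * (pd t (V j) v - v t * V j v) := by
    intro t j v
    rw [pd_mul t (hf0d v) (hVd j v), pd_f0v]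
    ring
  have hInt2 : ∀ (t : Fin d) (j : Fin r),
      Integrable (fun v => V k0 v * pd t (fun w => f0v w * V j w) v) := by
    intro t j
    have he : (fun v => V k0 v * pd t (fun w => f0v w * V j w) v)
        = fun v => f0v v * (V k0 v * (pd t (V j) v - v t * V j v)) := by
      funext v; rw [hpdfv t j v]; ring
    rw [he]
    exact integrable_f0v_mul hd ((cV k0).mul ((cdV j t).sub ((cproj t).mul (cV j))))
      ((pgV k0).mul ((pgdV j t).sub ((polyG_proj t).mul (pgV j))))
  -- derivative of `V k0`
  have hpdk0 : ∀ (t : Fin d) (v : Fin d → ℝ), pd t (V k0) v = if t = s then c⁻¹ else 0 := by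
    intro t v
    have h1 : V k0 = fun v : Fin d → ℝ => c⁻¹ * v s := by
      rw [hVk0]; funext w; rw [div_eq_inv_mul]
    rw [h1, pd_const_mul t (differentiable_proj s v) c⁻¹, pd_proj]
    by_cases h : t = s
    · subst h; simp
    · simp [Pi.single_apply, h, Ne.symm h]
  -- integration by parts
  have hbI : ∀ (t : Fin d) (j : Fin r),
      (∫ v, V k0 v * pd t (fun w => f0v w * V j w) v)
        = -((if t = s then c⁻¹ else 0) * ∫ v, f0v v * V j v) := by
    intro t j
    have he1 : (fun v => pd t (V k0) v * (f0v v * V j v))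
        = fun v => (if t = s then c⁻¹ else 0) * (f0v v * V j v) := by
      funext v; rw [hpdk0]
    have h1 : Integrable (fun v => pd t (V k0) v * (f0v v * V j v)) := by
      rw [he1]; exact (hIntm j).const_mul _
    have h3 : Integrable (fun v => V k0 v * (f0v v * V j v)) := by
      have he : (fun v => V k0 v * (f0v v * V j v))
          = fun v => f0v v * (V k0 v * V j v) := by funext v; ring
      rw [he]
      exact integrable_f0v_mul hd ((cV k0).mul (cV j)) ((pgV k0).mul (pgV j))
    have hmain := ibp t (hVd k0) (hfvd j) h1 (hInt2 t j) h3
    rw [hmain]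
    congr 1
    rw [he1]
    exact integral_const_mul _ _
  -- the moment in terms of the basis
  have hρx : ∀ x, ρ x = ∑ i, ∑ j, (X i x * S i j) * ∫ v, f0v v * V j v := by
    intro x
    have h1 : (fun v => fn x v) = fun v => ∑ i, ∑ j, (X i x * S i j) * (f0v v * V j v) := by
      funext v
      simp only [hfn, Finset.mul_sum]
      exact Finset.sum_congr rfl fun i _ => Finset.sum_congr rfl fun j _ => by ring
    simp only [hρ]
    rw [show (∫ v, fn x v) = ∫ v, ∑ i, ∑ j, (X i x * S i j) * (f0v v * V j v) by rw [← h1]]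
    rw [integral_sum2 _ (fun i j => (hIntm j).const_mul _)]
    exact Finset.sum_congr rfl fun i _ => Finset.sum_congr rfl fun j _ =>
      integral_const_mul _ _
  -- derivative formulas
  have da : ∀ (v' : Fin d → ℝ) (t : Fin d) (x' : Fin d → ℝ),
      pd t (fun y => fn y v') x'
        = ∑ i, ∑ j, (S i j * (f0v v' * V j v')) * pd t (X i) x' := by
    intro v' t x'
    have h1 : (fun y => fn y v')
        = fun y => ∑ i, (∑ j, S i j * (f0v v' * V j v')) * X i y := by
      funext y
      simp only [hfn, Finset.mul_sum, Finset.sum_mul]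
      exact Finset.sum_congr rfl fun i _ => Finset.sum_congr rfl fun j _ => by ring
    rw [h1, pd_sum Finset.univ _ (fun i _ => ((hXd i) x').const_mul _) t,
      Finset.sum_congr rfl fun i (_ : i ∈ Finset.univ) => pd_const_mul t ((hXd i) x') _]
    exact Finset.sum_congr rfl fun i _ => Finset.sum_mul _ _ _
  have db : ∀ (t : Fin d) (x' v' : Fin d → ℝ),
      pd t (fn x') v'
        = ∑ j, ∑ i, (X i x' * S i j) * pd t (fun w => f0v w * V j w) v' := by
    intro t x' v'
    have h1 : fn x' = fun w => ∑ j, (∑ i, X i x' * S i j) * (f0v w * V j w) := by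
      funext w
      simp only [hfn, Finset.mul_sum, Finset.sum_mul]
      rw [Finset.sum_comm]
      exact Finset.sum_congr rfl fun j _ => Finset.sum_congr rfl fun i _ => by ring
    rw [h1, pd_sum Finset.univ _ (fun j _ => ((hfvd j) v').const_mul _) t,
      Finset.sum_congr rfl fun j (_ : j ∈ Finset.univ) => pd_const_mul t ((hfvd j) v') _]
    exact Finset.sum_congr rfl fun j _ => Finset.sum_mul _ _ _
  -- computation of the integral ∫ V_{k0} RHS
  have hI : ∀ x, (∫ v, V k0 v * RHS x v)
      = (∑ t, ∑ i, ∑ j,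
          (-(S i j * (∫ v, f0v v * (v t * (V j v * V k0 v))))) * pd t (X i) x)
        - c⁻¹ * (E x s * ρ x) := by
    intro x
    have hint : (fun v => V k0 v * RHS x v) = fun v =>
        (∑ t, ∑ i, ∑ j,
          (-(pd t (X i) x * S i j)) * (f0v v * (v t * (V j v * V k0 v))))
        + (∑ t, ∑ j, ∑ i,
          (E x t * (X i x * S i j)) * (V k0 v * pd t (fun w => f0v w * V j w) v)) := by
      funext v
      simp only [hRHS]
      simp only [da v, db]
      rw [mul_add]
      congr 1
      · rw [mul_neg, ← neg_mul]
        simp only [Finset.mul_sum]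
        exact Finset.sum_congr rfl fun t _ => Finset.sum_congr rfl fun i _ =>
          Finset.sum_congr rfl fun j _ => by ring
      · simp only [Finset.mul_sum]
        exact Finset.sum_congr rfl fun t _ => Finset.sum_congr rfl fun j _ =>
          Finset.sum_congr rfl fun i _ => by ring
    rw [hint]
    rw [integral_add
      (integrable_finset_sum _ fun t _ => integrable_finset_sum _ fun i _ =>
        integrable_finset_sum _ fun j _ => (hInt1 t j k0).const_mul _)
      (integrable_finset_sum _ fun t _ => integrable_finset_sum _ fun j _ =>
        integrable_finset_sum _ fun i _ => (hInt2 t j).const_mul _)]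
    rw [integral_sum3 _ (fun t i j => (hInt1 t j k0).const_mul _),
      integral_sum3 _ (fun t j i => (hInt2 t j).const_mul _)]
    have e1 : (∑ t, ∑ i, ∑ j,
        ∫ v, (-(pd t (X i) x * S i j)) * (f0v v * (v t * (V j v * V k0 v))))
        = ∑ t, ∑ i, ∑ j,
          (-(S i j * (∫ v, f0v v * (v t * (V j v * V k0 v))))) * pd t (X i) x := by
      refine Finset.sum_congr rfl fun t _ => Finset.sum_congr rfl fun i _ =>
        Finset.sum_congr rfl fun j _ => ?_
      rw [integral_const_mul]; ring
    have e2 : (∑ t, ∑ j, ∑ i,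
        ∫ v, (E x t * (X i x * S i j)) * (V k0 v * pd t (fun w => f0v w * V j w) v))
        = -(c⁻¹ * (E x s * ρ x)) := by
      have e21 : ∀ (t : Fin d) (j i : Fin r),
          (∫ v, (E x t * (X i x * S i j)) * (V k0 v * pd t (fun w => f0v w * V j w) v))
            = (E x t * (X i x * S i j))
              * (-((if t = s then c⁻¹ else 0) * ∫ v, f0v v * V j v)) := by
        intro t j i; rw [integral_const_mul, hbI t j]
      simp only [e21]
      rw [Finset.sum_eq_single s]
      · simp only [if_pos rfl]
        calc (∑ j, ∑ i, (E x s * (X i x * S i j))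
              * (-(c⁻¹ * ∫ v, f0v v * V j v)))
            = ∑ j, ∑ i, -(c⁻¹ * (E x s * ((X i x * S i j) * ∫ v, f0v v * V j v))) :=
              Finset.sum_congr rfl fun j _ => Finset.sum_congr rfl fun i _ => by ring
          _ = -(c⁻¹ * (E x s * ∑ j, ∑ i, (X i x * S i j) * ∫ v, f0v v * V j v)) := by
              simp only [Finset.mul_sum, Finset.sum_neg_distrib]
          _ = -(c⁻¹ * (E x s * ρ x)) := by rw [hρx x, Finset.sum_comm]
      · intro t _ ht
        simp [ht]
      · intro hs; exact absurd (Finset.mem_univ s) hs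
    rw [e1, e2]
    ring
  -- solve for E_s ρ
  have hEρ : ∀ x, E x s * ρ x
      = (c / τ) * (((∑ i, S i k0 * X i x)
          + τ * (∑ t, ∑ i, ∑ j,
              (-(S i j * (∫ v, f0v v * (v t * (V j v * V k0 v))))) * pd t (X i) x))
        - K1 k0 x) := by
    intro x
    have hKx : K1 k0 x = (∑ i, X i x * S i k0)
        + τ * ((∑ t, ∑ i, ∑ j,
            (-(S i j * (∫ v, f0v v * (v t * (V j v * V k0 v))))) * pd t (X i) x)
          - c⁻¹ * (E x s * ρ x)) := by
      simp only [hK1]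
      rw [hI x]
    rw [hKx]
    have h1 : (∑ i, X i x * S i k0) = ∑ i, S i k0 * X i x :=
      Finset.sum_congr rfl fun i _ => mul_comm _ _
    rw [h1]
    field_simp
    ring
  -- membership in the span
  have hmem : (fun x => E x s * ρ x) ∈ Submodule.span ℝ
      (Set.range X ∪ Set.range (fun p : Fin r × Fin d => pd p.2 (X p.1))
        ∪ Set.range K1) := by
    have hfun : (fun x => E x s * ρ x)
        = (c / τ) • (((∑ i, S i k0 • X i)
            + τ • (∑ t, ∑ i : Fin r, ∑ j : Fin r,
                (-(S i j * (∫ v, f0v v * (v t * (V j v * V k0 v))))) • pd t (X i)))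
          - K1 k0) := by
      funext x
      simp only [Pi.smul_apply, Pi.add_apply, Pi.sub_apply, Finset.sum_apply, smul_eq_mul]
      exact hEρ x
    rw [hfun]
    refine Submodule.smul_mem _ _ (Submodule.sub_mem _ (Submodule.add_mem _ ?_ ?_) ?_)
    · refine Submodule.sum_mem _ fun i _ => Submodule.smul_mem _ _ (Submodule.subset_span ?_)
      exact Set.mem_union_left _ (Set.mem_union_left _ ⟨i, rfl⟩)
    · refine Submodule.smul_mem _ _ (Submodule.sum_mem _ fun t _ =>
        Submodule.sum_mem _ fun i _ => Submodule.sum_mem _ fun j _ =>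
          Submodule.smul_mem _ _ (Submodule.subset_span ?_))
      exact Set.mem_union_left _ (Set.mem_union_right _ ⟨(i, t), rfl⟩)
    · exact Submodule.subset_span (Set.mem_union_right _ ⟨k0, rfl⟩)
  -- expansion in the augmented basis
  have hsub : Submodule.span ℝ
      (Set.range X ∪ Set.range (fun p : Fin r × Fin d => pd p.2 (X p.1))
        ∪ Set.range K1) ≤ Submodule.span ℝ (Set.range Xt) := by
    rw [Submodule.span_le]
    rintro f ((⟨i, rfl⟩ | ⟨p, rfl⟩) | ⟨i, rfl⟩)
    · exact hspanX i
    · exact hspanDX p.1 p.2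
    · exact hspanK i
  obtain ⟨g, hg⟩ := (Submodule.mem_span_range_iff_exists_fun ℝ).mp (hsub hmem)
  have hgx : ∀ x, (∑ k, g k * Xt k x) = E x s * ρ x := by
    intro x
    have h1 := congrFun hg x
    simpa [Finset.sum_apply, Pi.smul_apply, smul_eq_mul] using h1
  have hsubIcc : cube d ⊆ Set.Icc (0 : Fin d → ℝ) 1 := by
    intro v hv
    rw [← Set.pi_univ_Icc]
    refine Set.mem_pi.mpr fun i _ => ?_
    have h2 := hv i (Set.mem_univ i)
    simp only [Pi.zero_apply, Pi.one_apply]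
    exact Set.Ioc_subset_Icc_self h2
  have hipOn : ∀ k l : Fin R, IntegrableOn (fun y => Xt k y * Xt l y) (cube d) := fun k l =>
    (((hXtsm k).continuous.mul (hXtsm l).continuous).integrableOn_Icc).mono_set hsubIcc
  have hcoef : ∀ k, ipx (Xt k) (fun y => E y s * ρ y) = g k := by
    intro k
    have h2 : (fun y => Xt k y * (E y s * ρ y)) = fun y => ∑ l, g l * (Xt k y * Xt l y) := by
      funext y
      rw [← hgx y, Finset.mul_sum]
      exact Finset.sum_congr rfl fun l _ => by ring
    show (∫ y in cube d, Xt k y * (E y s * ρ y)) = g k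
    rw [h2, integral_finset_sum _ (fun l _ => (hipOn k l).const_mul (g l))]
    have h3 : ∀ l, (∫ y in cube d, g l * (Xt k y * Xt l y))
        = g l * (if k = l then (1:ℝ) else 0) := by
      intro l
      rw [integral_const_mul]
      congr 1
      exact hXton k l
    rw [Finset.sum_congr rfl fun l (_ : l ∈ Finset.univ) => h3 l]
    simp [mul_ite, mul_one, mul_zero, Finset.sum_ite_eq]
  refine ⟨hmem, fun x => ?_⟩
  have h4 : ∀ k, ipx (Xt k) (fun y => E y s * ρ y) * Xt k x = g k * Xt k x := by
    intro k; rw [hcoef k]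
  rw [Finset.sum_congr rfl fun k (_ : k ∈ Finset.univ) => h4 k]
  exact hgx x
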